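/- arXiv:1104.0281 — 8 statements merged into one kernel-verified Lean document; each statement's English description precedes it below -/
import Mathlib

section
/- Let (A,∘) be a finite-dimensional pre-Lie algebra over a field of characteristic zero and let r ∈ A⊗A be symmetric. Then r is a solution of the S-equation in (A,∘) if and only if the induced linear map r : A* → A (defined by ⟨r(u*), v*⟩ = ⟨r, u*⊗v*⟩) is an O-operator of (A,∘) associated to the module (L_∘* − R_∘*, −R_∘*, A*). -/
set_option maxSynthPendingDepth 3
set_option synthInstance.maxHeartbeats 400000
set_option maxHeartbeats 800000

open TensorProduct

/-- A pre-Lie algebra structure. -/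
def IsPreLie {K A : Type*} [Field K] [AddCommGroup A] [Module K A]
    (mul : A →ₗ[K] A →ₗ[K] A) : Prop :=
  ∀ x y z : A, mul (mul x y) z - mul x (mul y z) = mul (mul y x) z - mul y (mul x z)

/-- An O-operator of a pre-Lie algebra `(A,∘)` associated to a module `(l,r,V)`. -/
def IsOOperator {K A V : Type*} [Field K] [AddCommGroup A] [Module K A]
    [AddCommGroup V] [Module K V]
    (mul : A →ₗ[K] A →ₗ[K] A) (l r : A →ₗ[K] Module.End K V) (T : V →ₗ[K] A) : Prop :=
  ∀ u v : V, mul (T u) (T v) = T (l (T u) v + r (T v) u)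

/-- The dual map `ρ* : A → gl(V*)` defined by `⟨ρ*(x)v*, u⟩ = −⟨v*, ρ(x)u⟩`. -/
noncomputable def dualRep {K A V : Type*} [Field K] [AddCommGroup A] [Module K A]
    [AddCommGroup V] [Module K V]
    (ρ : A →ₗ[K] Module.End K V) : A →ₗ[K] Module.End K (Module.Dual K V) :=
  -((Module.Dual.transpose (R := K) (M := V) (M' := V)) ∘ₗ ρ)

/-- `r₁₂ ∘ r₁₃`: on pure tensors, `(a⊗b, c⊗d) ↦ (a∘c) ⊗ b ⊗ d`. -/
noncomputable def sTerm12_13 {K A : Type*} [Field K] [AddCommGroup A] [Module K A]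
    (mul : A →ₗ[K] A →ₗ[K] A) (r s : A ⊗[K] A) : A ⊗[K] (A ⊗[K] A) :=
  (TensorProduct.map (TensorProduct.lift mul) LinearMap.id)
    ((TensorProduct.tensorTensorTensorComm K A A A A) (r ⊗ₜ[K] s))

/-- `r₁₂ ∘ r₂₃`: on pure tensors, `(a⊗b, c⊗d) ↦ a ⊗ (b∘c) ⊗ d`. -/
noncomputable def sTerm12_23 {K A : Type*} [Field K] [AddCommGroup A] [Module K A]
    (mul : A →ₗ[K] A →ₗ[K] A) (r s : A ⊗[K] A) : A ⊗[K] (A ⊗[K] A) :=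
  (TensorProduct.map LinearMap.id
      ((TensorProduct.map (TensorProduct.lift mul) LinearMap.id) ∘ₗ
        (TensorProduct.assoc K A A A).symm.toLinearMap))
    ((TensorProduct.assoc K A A (A ⊗[K] A)) (r ⊗ₜ[K] s))

/-- `[r₁₃, r₂₃]`: on pure tensors, `(a⊗b, c⊗d) ↦ a ⊗ c ⊗ (b∘d − d∘b)`. -/
noncomputable def sTermBr13_23 {K A : Type*} [Field K] [AddCommGroup A] [Module K A]
    (mul : A →ₗ[K] A →ₗ[K] A) (r s : A ⊗[K] A) : A ⊗[K] (A ⊗[K] A) :=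
  (TensorProduct.map LinearMap.id
      (TensorProduct.map LinearMap.id (TensorProduct.lift (mul - mul.flip))))
    ((TensorProduct.assoc K A A (A ⊗[K] A))
      ((TensorProduct.tensorTensorTensorComm K A A A A) (r ⊗ₜ[K] s)))

/-- The S-equation in a pre-Lie algebra: `−r₁₂∘r₁₃ + r₁₂∘r₂₃ + [r₁₃,r₂₃] = 0`. -/
def IsSEquationSolution {K A : Type*} [Field K] [AddCommGroup A] [Module K A]
    (mul : A →ₗ[K] A →ₗ[K] A) (r : A ⊗[K] A) : Prop :=
  -sTerm12_13 mul r r + sTerm12_23 mul r r + sTermBr13_23 mul r r = 0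

/-- The linear map `A* → A` induced by `r ∈ A⊗A` via `⟨r(u*), v*⟩ = ⟨r, u*⊗v*⟩`;
on pure tensors, `a⊗b ↦ (u* ↦ u*(a) • b)`. -/
noncomputable def inducedMap {K A : Type*} [Field K] [AddCommGroup A] [Module K A]
    (r : A ⊗[K] A) : Module.Dual K A →ₗ[K] A :=
  dualTensorHom K (Module.Dual K A) A
    ((TensorProduct.map (Module.Dual.eval K A) LinearMap.id) r)


section Aux

variable {K A : Type*} [Field K] [AddCommGroup A] [Module K A]

/-- Triple contraction pairing. -/
noncomputable def pair3 (ξ η ζ : Module.Dual K A) : A ⊗[K] (A ⊗[K] A) →ₗ[K] K :=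
  TensorProduct.lift ((LinearMap.mul K K).compl₁₂ ξ
    (TensorProduct.lift ((LinearMap.mul K K).compl₁₂ η ζ)))

@[simp] lemma pair3_tmul (ξ η ζ : Module.Dual K A) (x y z : A) :
    pair3 ξ η ζ (x ⊗ₜ[K] (y ⊗ₜ[K] z)) = ξ x * (η y * ζ z) := by
  simp [pair3]

@[simp] lemma inducedMap_tmul (a b : A) (ψ : Module.Dual K A) :
    inducedMap (K := K) (a ⊗ₜ[K] b) ψ = ψ a • b := by
  simp [inducedMap]

@[simp] lemma inducedMap_zero : inducedMap (0 : A ⊗[K] A) = 0 := by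
  simp [inducedMap]

@[simp] lemma inducedMap_add (x y : A ⊗[K] A) :
    inducedMap (x + y) = inducedMap x + inducedMap y := by
  simp [inducedMap, map_add]

lemma dualRep_apply (ρ : A →ₗ[K] Module.End K A) (x : A) (f : Module.Dual K A) (y : A) :
    dualRep ρ x f y = - f (ρ x y) := by
  simp [dualRep, Module.Dual.transpose]

lemma pair3_eq_zero_iff [FiniteDimensional K A] (t : A ⊗[K] (A ⊗[K] A))
    (ht : ∀ ξ η ζ : Module.Dual K A, pair3 ξ η ζ t = 0) : t = 0 := by
  classical
  obtain ⟨n, b⟩ : ∃ n, Nonempty (Module.Basis (Fin n) K A) :=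
    ⟨_, ⟨Module.finBasis K A⟩⟩
  obtain ⟨b⟩ := b
  set B := b.tensorProduct (b.tensorProduct b) with hB
  rw [← LinearEquiv.map_eq_zero_iff B.repr]
  ext x
  obtain ⟨i, j, k⟩ := x
  have key : (B.coord (i, (j, k))) = pair3 (b.coord i) (b.coord j) (b.coord k) := by
    apply B.ext
    rintro ⟨i', j', k'⟩
    simp only [hB, Module.Basis.tensorProduct_apply, Module.Basis.coord_apply, Module.Basis.repr_self,
      pair3_tmul, Finsupp.single_apply]
    by_cases h1 : i = i' <;> by_cases h2 : j = j' <;> by_cases h3 : k = k' <;>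
      simp [h1, h2, h3, Prod.ext_iff, Finsupp.single_apply, eq_comm]
  have : B.repr t (i, (j, k)) = pair3 (b.coord i) (b.coord j) (b.coord k) t := by
    rw [← key]; rfl
  simp [this, ht]

lemma inducedMap_adjoint (r : A ⊗[K] A) (ψ ζ : Module.Dual K A) :
    ζ (inducedMap r ψ) = ψ (inducedMap ((TensorProduct.comm K A A) r) ζ) := by
  induction r using TensorProduct.induction_on with
  | zero => simp
  | tmul a b => simp [mul_comm]
  | add x y hx hy => simp [map_add, hx, hy]

lemma sTerm12_13_tmul (mul : A →ₗ[K] A →ₗ[K] A) (a b c d : A) :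
    sTerm12_13 mul (a ⊗ₜ[K] b) (c ⊗ₜ[K] d) = mul a c ⊗ₜ[K] (b ⊗ₜ[K] d) := by
  simp [sTerm12_13]

lemma sTerm12_23_tmul (mul : A →ₗ[K] A →ₗ[K] A) (a b c d : A) :
    sTerm12_23 mul (a ⊗ₜ[K] b) (c ⊗ₜ[K] d) = a ⊗ₜ[K] (mul b c ⊗ₜ[K] d) := by
  simp [sTerm12_23]

lemma sTermBr13_23_tmul (mul : A →ₗ[K] A →ₗ[K] A) (a b c d : A) :
    sTermBr13_23 mul (a ⊗ₜ[K] b) (c ⊗ₜ[K] d) = a ⊗ₜ[K] (c ⊗ₜ[K] (mul b d - mul d b)) := by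
  simp [sTermBr13_23, TensorProduct.tmul_sub]

lemma pair3_sTerm12_13 (mul : A →ₗ[K] A →ₗ[K] A) (ξ η ζ : Module.Dual K A)
    (r s : A ⊗[K] A) :
    pair3 ξ η ζ (sTerm12_13 mul r s) =
      ξ (mul (inducedMap ((TensorProduct.comm K A A) r) η)
          (inducedMap ((TensorProduct.comm K A A) s) ζ)) := by
  induction r using TensorProduct.induction_on with
  | zero => simp [sTerm12_13]
  | add x y hx hy =>
    have expand : sTerm12_13 mul (x + y) s = sTerm12_13 mul x s + sTerm12_13 mul y s := by
      simp only [sTerm12_13, TensorProduct.add_tmul, map_add]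
    rw [expand, map_add, hx, hy]
    simp
  | tmul a b =>
    induction s using TensorProduct.induction_on with
    | zero => simp [sTerm12_13]
    | add x y hx hy =>
      have expand : sTerm12_13 mul (a ⊗ₜ[K] b) (x + y) =
          sTerm12_13 mul (a ⊗ₜ[K] b) x + sTerm12_13 mul (a ⊗ₜ[K] b) y := by
        simp only [sTerm12_13, TensorProduct.tmul_add, map_add]
      rw [expand, map_add, hx, hy]
      simp
    | tmul c d =>
      rw [sTerm12_13_tmul]
      simp
      ring

lemma pair3_sTerm12_23 (mul : A →ₗ[K] A →ₗ[K] A) (ξ η ζ : Module.Dual K A)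
    (r s : A ⊗[K] A) :
    pair3 ξ η ζ (sTerm12_23 mul r s) =
      η (mul (inducedMap r ξ) (inducedMap ((TensorProduct.comm K A A) s) ζ)) := by
  induction r using TensorProduct.induction_on with
  | zero => simp [sTerm12_23]
  | add x y hx hy =>
    have expand : sTerm12_23 mul (x + y) s = sTerm12_23 mul x s + sTerm12_23 mul y s := by
      simp only [sTerm12_23, TensorProduct.add_tmul, map_add]
    rw [expand, map_add, hx, hy]
    simp
  | tmul a b =>
    induction s using TensorProduct.induction_on with
    | zero => simp [sTerm12_23]
    | add x y hx hy =>
      have expand : sTerm12_23 mul (a ⊗ₜ[K] b) (x + y) =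
          sTerm12_23 mul (a ⊗ₜ[K] b) x + sTerm12_23 mul (a ⊗ₜ[K] b) y := by
        simp only [sTerm12_23, TensorProduct.tmul_add, map_add]
      rw [expand, map_add, hx, hy]
      simp
    | tmul c d =>
      rw [sTerm12_23_tmul]
      simp
      ring

lemma pair3_sTermBr13_23 (mul : A →ₗ[K] A →ₗ[K] A) (ξ η ζ : Module.Dual K A)
    (r s : A ⊗[K] A) :
    pair3 ξ η ζ (sTermBr13_23 mul r s) =
      ζ (mul (inducedMap r ξ) (inducedMap s η)) -
        ζ (mul (inducedMap s η) (inducedMap r ξ)) := by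
  induction r using TensorProduct.induction_on with
  | zero => simp [sTermBr13_23]
  | add x y hx hy =>
    have expand : sTermBr13_23 mul (x + y) s = sTermBr13_23 mul x s + sTermBr13_23 mul y s := by
      simp only [sTermBr13_23, TensorProduct.add_tmul, map_add]
    rw [expand, map_add, hx, hy]
    simp
    ring
  | tmul a b =>
    induction s using TensorProduct.induction_on with
    | zero => simp [sTermBr13_23]
    | add x y hx hy =>
      have expand : sTermBr13_23 mul (a ⊗ₜ[K] b) (x + y) =
          sTermBr13_23 mul (a ⊗ₜ[K] b) x + sTermBr13_23 mul (a ⊗ₜ[K] b) y := by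
        simp only [sTermBr13_23, TensorProduct.tmul_add, map_add]
      rw [expand, map_add, hx, hy]
      simp
      ring
    | tmul c d =>
      rw [sTermBr13_23_tmul]
      simp [TensorProduct.tmul_sub, map_sub]
      ring

end Aux

/-- For a finite-dimensional pre-Lie algebra `(A,∘)` over a field of
characteristic zero and a symmetric `r ∈ A⊗A`, `r` is a solution of the S-equation
in `(A,∘)` iff the induced map `A* → A` is an O-operator of `(A,∘)` associated to
the module `(L_∘* − R_∘*, −R_∘*, A*)` (where `L_∘ = mul` and `R_∘ = mul.flip`). -/
theorem sEquation_iff_OOperator {K A : Type*} [Field K] [CharZero K]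
    [AddCommGroup A] [Module K A] [FiniteDimensional K A]
    (mul : A →ₗ[K] A →ₗ[K] A) (h : IsPreLie mul)
    (r : A ⊗[K] A) (hsymm : (TensorProduct.comm K A A) r = r) :
    IsSEquationSolution mul r ↔
      IsOOperator mul (dualRep mul - dualRep mul.flip) (-(dualRep mul.flip))
        (inducedMap r) := by
  classical
  set T := inducedMap r with hT
  have hTr : inducedMap ((TensorProduct.comm K A A) r) = T := by rw [hsymm]
  have hadj : ∀ ψ ζ : Module.Dual K A, ζ (T ψ) = ψ (T ζ) := by
    intro ψ ζ
    rw [hT, inducedMap_adjoint, hsymm]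
  have hS : IsSEquationSolution mul r ↔
      ∀ ξ η ζ : Module.Dual K A,
        -(ξ (mul (T η) (T ζ))) + η (mul (T ξ) (T ζ)) +
          (ζ (mul (T ξ) (T η)) - ζ (mul (T η) (T ξ))) = 0 := by
    constructor
    · intro hsol ξ η ζ
      have h1 := congrArg (pair3 ξ η ζ) hsol
      simpa [map_add, map_neg, pair3_sTerm12_13, pair3_sTerm12_23,
        pair3_sTermBr13_23, hTr] using h1
    · intro hpt
      apply pair3_eq_zero_iff
      intro ξ η ζ
      simp only [map_add, map_neg, pair3_sTerm12_13, pair3_sTerm12_23,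
        pair3_sTermBr13_23, hTr]
      linear_combination hpt ξ η ζ
  have hO : (IsOOperator mul (dualRep mul - dualRep mul.flip) (-(dualRep mul.flip)) T) ↔
      ∀ ξ η ζ : Module.Dual K A,
        ζ (mul (T ξ) (T η)) =
          -(η (mul (T ξ) (T ζ))) + η (mul (T ζ) (T ξ)) + ξ (mul (T ζ) (T η)) := by
    constructor
    · intro hop ξ η ζ
      have h1 := congrArg ζ (hop ξ η)
      rw [hadj] at h1
      simp only [LinearMap.sub_apply, LinearMap.neg_apply, LinearMap.add_apply,
        map_add, map_sub, map_neg, dualRep_apply, LinearMap.flip_apply] at h1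
      linear_combination h1
    · intro hpt ξ η
      rw [← sub_eq_zero, ← Module.forall_dual_apply_eq_zero_iff K]
      intro ζ
      rw [map_sub, hadj]
      simp only [LinearMap.sub_apply, LinearMap.neg_apply, LinearMap.add_apply,
        map_add, map_sub, map_neg, dualRep_apply, LinearMap.flip_apply]
      linear_combination hpt ξ η ζ
  rw [hS, hO]
  constructor
  · intro H ξ η ζ
    linear_combination H ξ ζ η
  · intro H ξ η ζ
    linear_combination H ξ ζ η
end

section
/- Let (A,▷,◁) be an L-dendriform algebra over a field of characteristic zero. Then the binary operation x•y = x▷y + x◁y defines a pre-Lie algebra structure on A (the associated horizontal pre-Lie algebra). -/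
/-- An L-dendriform algebra structure: two bilinear operations `tr` (`▷`) and `tl` (`◁`)
satisfying the two L-dendriform identities. -/
def IsLDendriform {K A : Type*} [Field K] [AddCommGroup A] [Module K A]
    (tr tl : A →ₗ[K] A →ₗ[K] A) : Prop :=
  (∀ x y z : A, tr x (tr y z) =
      tr (tr x y) z + tr (tl x y) z + tr y (tr x z) - tr (tl y x) z - tr (tr y x) z) ∧
  (∀ x y z : A, tr x (tl y z) =
      tl (tr x y) z + tl y (tr x z) + tl y (tl x z) - tl (tl y x) z)

/-- For an L-dendriform algebra `(A,▷,◁)` over a field of characteristic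
zero, the operation `x•y = x▷y + x◁y` (i.e. `tr + tl`) defines a pre-Lie algebra
structure on `A` (the associated horizontal pre-Lie algebra). -/
theorem horizontal_preLie_of_LDendriform {K A : Type*} [Field K] [CharZero K]
    [AddCommGroup A] [Module K A]
    (tr tl : A →ₗ[K] A →ₗ[K] A) (h : IsLDendriform tr tl) :
    IsPreLie (tr + tl) := by
  intro x y z
  have e1 := h.1 x y z
  have e2 := h.2 x y z
  have e3 := h.2 y x z
  simp only [LinearMap.add_apply, map_add, LinearMap.map_sub, LinearMap.sub_apply]
  rw [e1, e2, e3]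
  abel
end

section
/- Let (A,▷,◁) be an L-dendriform algebra over a field of characteristic zero. Then the binary operation x∘y = x▷y − y◁x defines a pre-Lie algebra structure on A (the associated vertical pre-Lie algebra). -/
/-- For an L-dendriform algebra `(A,▷,◁)` over a field of characteristic
zero, the operation `x∘y = x▷y − y◁x` (i.e. `tr - tl.flip`) defines a pre-Lie algebra
structure on `A` (the associated vertical pre-Lie algebra). -/
theorem vertical_preLie_of_LDendriform {K A : Type*} [Field K] [CharZero K]
    [AddCommGroup A] [Module K A]
    (tr tl : A →ₗ[K] A →ₗ[K] A) (h : IsLDendriform tr tl) :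
    IsPreLie (tr - tl.flip) := by
  obtain ⟨h1, h2⟩ := h
  intro x y z
  simp only [LinearMap.sub_apply, LinearMap.flip_apply, map_sub]
  rw [h1 x y z, h2 x z y, h2 y z x]
  abel
end

section
/- Let A be a vector space over a field of characteristic zero with two bilinear operations ▷ and ◁. Then (A,▷,◁) is an L-dendriform algebra if and only if the operation x•y = x▷y + x◁y makes (A,•) a pre-Lie algebra and (L_▷, R_◁, A) is a module of (A,•), where L_▷(x)y = x▷y and R_◁(y)x = x◁y. -/
/-- A module `(l,r,V)` of a pre-Lie algebra `(A,∘)`. -/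
def IsPreLieModule {K A V : Type*} [Field K] [AddCommGroup A] [Module K A]
    [AddCommGroup V] [Module K V]
    (mul : A →ₗ[K] A →ₗ[K] A) (l r : A →ₗ[K] Module.End K V) : Prop :=
  (∀ x y : A, l x * l y - l (mul x y) = l y * l x - l (mul y x)) ∧
  (∀ x y : A, l x * r y - r y * l x = r (mul x y) - r y * r x)

/-- `(A,▷,◁)` is L-dendriform iff `x•y = x▷y + x◁y` is pre-Lie and
`(L_▷, R_◁, A)` is a module of `(A,•)`, where `L_▷(x)y = x▷y` (i.e. `tr`) and
`R_◁(y)x = x◁y` (i.e. `tl.flip`). -/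
theorem isLDendriform_iff_horizontal_module {K A : Type*} [Field K] [CharZero K]
    [AddCommGroup A] [Module K A]
    (tr tl : A →ₗ[K] A →ₗ[K] A) :
    IsLDendriform tr tl ↔
      (IsPreLie (tr + tl) ∧ IsPreLieModule (tr + tl) tr tl.flip) := by
  constructor
  · rintro ⟨h1, h2⟩
    refine ⟨?_, ?_, ?_⟩
    · intro x y z
      simp only [LinearMap.add_apply, map_add]
      linear_combination (norm := abel) h2 y x z - h2 x y z - h1 x y z
    · intro x y
      ext z
      simp only [Module.End.mul_apply, LinearMap.sub_apply, LinearMap.add_apply, map_add]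
      linear_combination (norm := abel) h1 x y z
    · intro x y
      ext z
      simp only [Module.End.mul_apply, LinearMap.sub_apply, LinearMap.add_apply, map_add,
        LinearMap.flip_apply]
      linear_combination (norm := abel) h2 x z y
  · rintro ⟨-, hm1, hm2⟩
    constructor
    · intro x y z
      have h := LinearMap.congr_fun (hm1 x y) z
      simp only [Module.End.mul_apply, LinearMap.sub_apply, LinearMap.add_apply, map_add] at h
      linear_combination (norm := abel) h
    · intro x y z
      have h := LinearMap.congr_fun (hm2 x z) y
      simp only [Module.End.mul_apply, LinearMap.sub_apply, LinearMap.add_apply, map_add,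
        LinearMap.flip_apply] at h
      linear_combination (norm := abel) h
end

section
/- Let A be a vector space over a field of characteristic zero with two bilinear operations ▷ and ◁. Then (A,▷,◁) is an L-dendriform algebra if and only if the operation x∘y = x▷y − y◁x makes (A,∘) a pre-Lie algebra and (L_▷, −L_◁, A) is a module of (A,∘), where L_▷(x)y = x▷y and L_◁(x)y = x◁y. -/
/-- `(A,▷,◁)` is L-dendriform iff `x∘y = x▷y − y◁x` (i.e. `tr - tl.flip`)
is pre-Lie and `(L_▷, −L_◁, A)` is a module of `(A,∘)`, where `L_▷ = tr` and
`L_◁ = tl`. -/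
theorem isLDendriform_iff_vertical_module {K A : Type*} [Field K] [CharZero K]
    [AddCommGroup A] [Module K A]
    (tr tl : A →ₗ[K] A →ₗ[K] A) :
    IsLDendriform tr tl ↔
      (IsPreLie (tr - tl.flip) ∧ IsPreLieModule (tr - tl.flip) tr (-tl)) := by
  constructor
  · rintro ⟨h1, h2⟩
    refine ⟨?_, ?_, ?_⟩
    · intro x y z
      simp only [LinearMap.sub_apply, LinearMap.flip_apply, map_sub]
      rw [h1 x y z, h1 y x z, h2 x z y, h2 y z x]
      abel
    · intro x y
      ext z
      simp only [LinearMap.sub_apply, LinearMap.flip_apply, map_sub,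
        Module.End.mul_apply]
      rw [h1 x y z, h1 y x z]
      abel
    · intro x y
      ext z
      simp only [LinearMap.sub_apply, LinearMap.flip_apply, map_sub,
        Module.End.mul_apply, LinearMap.neg_apply, map_neg]
      rw [h2 x y z]
      abel
  · rintro ⟨_, hm1, hm2⟩
    constructor
    · intro x y z
      have := congrFun (congrArg DFunLike.coe (hm1 x y)) z
      simp only [LinearMap.sub_apply, LinearMap.flip_apply, map_sub,
        Module.End.mul_apply] at this
      rw [← sub_eq_zero] at this ⊢
      abel_nf at this ⊢
      exact this
    · intro x y z
      have := congrFun (congrArg DFunLike.coe (hm2 x y)) z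
      simp only [LinearMap.sub_apply, LinearMap.flip_apply, map_sub,
        Module.End.mul_apply, LinearMap.neg_apply, map_neg] at this
      rw [eq_comm] at this
      rw [← sub_eq_zero] at this ⊢
      abel_nf at this ⊢
      exact this
end

section
/- Let (A,∘) be a pre-Lie algebra over a field of characteristic zero, (l,r,V) a module, and T : V → A an O-operator associated to (l,r,V). Then the operations u▷v = l(T(u))v and u◁v = −r(T(u))v define an L-dendriform algebra structure on V, and T is a homomorphism of pre-Lie algebras from the associated vertical pre-Lie algebra (V,∗), u∗v = u▷v − v◁u, to (A,∘), i.e., T(u∗v) = T(u)∘T(v) for all u,v ∈ V. -/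
/-- If `T` is an O-operator of a pre-Lie algebra `(A,∘)` associated to a
module `(l,r,V)`, then `u▷v = l(T(u))v` and `u◁v = −r(T(u))v` (i.e. `l ∘ₗ T` and
`-(r ∘ₗ T)`) define an L-dendriform algebra structure on `V`, and `T` is a
homomorphism from the associated vertical pre-Lie algebra `(V,∗)`, `u∗v = u▷v − v◁u`,
to `(A,∘)`. -/
theorem LDendriform_of_OOperator {K A V : Type*} [Field K] [CharZero K]
    [AddCommGroup A] [Module K A] [AddCommGroup V] [Module K V]
    (mul : A →ₗ[K] A →ₗ[K] A) (hA : IsPreLie mul)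
    (l r : A →ₗ[K] Module.End K V) (hmod : IsPreLieModule mul l r)
    (T : V →ₗ[K] A) (hT : IsOOperator mul l r T) :
    IsLDendriform (l ∘ₗ T) (-(r ∘ₗ T)) ∧
    (∀ u v : V, T ((l ∘ₗ T) u v - (-(r ∘ₗ T)) v u) = mul (T u) (T v)) := by

  obtain ⟨h1, h2⟩ := hmod
  refine ⟨⟨?_, ?_⟩, ?_⟩
  · intro x y z
    have e1 := DFunLike.congr_fun (congrArg l (hT x y)) z
    have e2 := DFunLike.congr_fun (congrArg l (hT y x)) z
    have e3 := DFunLike.congr_fun (h1 (T x) (T y)) z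
    simp only [LinearMap.comp_apply, LinearMap.neg_apply, map_add, map_neg,
      LinearMap.add_apply, LinearMap.neg_apply, LinearMap.sub_apply, Module.End.mul_apply] at *
    linear_combination (norm := abel) e3 + e1 - e2
  · intro x y z
    have e1 := DFunLike.congr_fun (congrArg r (hT x y)) z
    have e3 := DFunLike.congr_fun (h2 (T x) (T y)) z
    simp only [LinearMap.comp_apply, LinearMap.neg_apply, map_add, map_neg,
      LinearMap.add_apply, LinearMap.neg_apply, LinearMap.sub_apply, Module.End.mul_apply] at *
    linear_combination (norm := abel) -e3 - e1
  · intro u v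
    simp only [LinearMap.comp_apply, LinearMap.neg_apply, sub_neg_eq_add]
    exact (hT u v).symm
end

section
/- Let (A,∘) be a pre-Lie algebra over a field of characteristic zero and R : A → A a Rota-Baxter operator of weight 0, i.e., R(x)∘R(y) = R(R(x)∘y + x∘R(y)) for all x,y ∈ A. Then the operations x▷y = R(x)∘y and x◁y = −y∘R(x) define an L-dendriform algebra structure on A. -/
/-- If `R` is a Rota-Baxter operator of weight 0 on a pre-Lie algebra
`(A,∘)` over a field of characteristic zero, then `x▷y = R(x)∘y` and `x◁y = −y∘R(x)`
(i.e. `mul ∘ₗ R` and `-(mul.flip ∘ₗ R)`) define an L-dendriform algebra structure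
on `A`. -/
theorem LDendriform_of_RotaBaxter {K A : Type*} [Field K] [CharZero K]
    [AddCommGroup A] [Module K A]
    (mul : A →ₗ[K] A →ₗ[K] A) (h : IsPreLie mul)
    (R : A →ₗ[K] A)
    (hR : ∀ x y : A, mul (R x) (R y) = R (mul (R x) y + mul x (R y))) :
    IsLDendriform (mul ∘ₗ R) (-(mul.flip ∘ₗ R)) := by
  constructor
  · intro x y z
    have e1 : mul (mul (R x) (R y)) z
        = mul (R (mul (R x) y)) z + mul (R (mul x (R y))) z := by
      rw [hR]; simp [map_add]
    have e2 : mul (mul (R y) (R x)) z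
        = mul (R (mul (R y) x)) z + mul (R (mul y (R x))) z := by
      rw [hR]; simp [map_add]
    have H := h (R x) (R y) z
    simp only [LinearMap.comp_apply, LinearMap.neg_apply, LinearMap.flip_apply,
      map_neg, LinearMap.neg_apply]
    linear_combination (norm := abel) -H + e1 - e2
  · intro x y z
    have e1 : mul z (mul (R x) (R y))
        = mul z (R (mul (R x) y)) + mul z (R (mul x (R y))) := by
      rw [hR]; simp [map_add]
    have H := h (R x) z (R y)
    simp only [LinearMap.comp_apply, LinearMap.neg_apply, LinearMap.flip_apply,
      map_neg, LinearMap.neg_apply]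
    linear_combination (norm := abel) H - e1
end

section
/- Let (A,∘) be a finite-dimensional pre-Lie algebra over a field of characteristic zero with a nondegenerate symmetric bilinear form B which is a 2-cocycle of (A,∘), i.e., B(x∘y, z) − B(x, y∘z) = B(y∘x, z) − B(y, x∘z) for all x,y,z ∈ A. Then the bilinear operations ▷ and ◁ determined by B(x▷y, z) = −B(y, [x,z]) and B(x◁y, z) = −B(y, z∘x) for all x,y,z ∈ A (where [x,z] = x∘z − z∘x) define an L-dendriform algebra structure on A which is compatible with (A,∘), i.e., x▷y − y◁x = x∘y for all x,y ∈ A. -/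
/-- Let `(A,∘)` be a finite-dimensional pre-Lie algebra over a field of
characteristic zero with a nondegenerate symmetric 2-cocycle `B`. Then the bilinear
operations `▷`, `◁` determined by `B(x▷y, z) = −B(y, [x,z])` and
`B(x◁y, z) = −B(y, z∘x)` (where `[x,z] = x∘z − z∘x`) define an L-dendriform algebra
structure on `A` compatible with `(A,∘)`, i.e. `x▷y − y◁x = x∘y`. -/
theorem LDendriform_of_pseudoHessian {K A : Type*} [Field K] [CharZero K]
    [AddCommGroup A] [Module K A] [FiniteDimensional K A]
    (mul : A →ₗ[K] A →ₗ[K] A) (h : IsPreLie mul)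
    (B : A →ₗ[K] A →ₗ[K] K)
    (hnd : ∀ x : A, (∀ y : A, B x y = 0) → x = 0)
    (hsymm : ∀ x y : A, B x y = B y x)
    (hcocycle : ∀ x y z : A,
      B (mul x y) z - B x (mul y z) = B (mul y x) z - B y (mul x z))
    (tr tl : A →ₗ[K] A →ₗ[K] A)
    (htr : ∀ x y z : A, B (tr x y) z = -(B y (mul x z - mul z x)))
    (htl : ∀ x y z : A, B (tl x y) z = -(B y (mul z x))) :
    IsLDendriform tr tl ∧ (∀ x y : A, tr x y - tl y x = mul x y) := by
  have key : ∀ u v : A, (∀ w : A, B u w = B v w) → u = v := by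
    intro u v huv
    have : u - v = 0 := by
      apply hnd
      intro w
      simp [map_sub, LinearMap.sub_apply, huv w]
    exact sub_eq_zero.mp this
  have htr' : ∀ a b c : A, B (tr a b) c = B b (mul c a) - B b (mul a c) := by
    intro a b c
    rw [htr a b c, map_sub]
    ring
  have hcomp : ∀ a b : A, tr a b - tl b a = mul a b := by
    intro x y
    apply key
    intro w
    simp only [map_sub, LinearMap.sub_apply, htr', htl]
    linear_combination -(hcocycle x y w) - (hcocycle y w x) - hsymm x (mul y w)
      - hsymm (mul y x) w - hsymm (mul w y) x
  have hP : ∀ u a b c : A, B u (mul (mul a b) c) - B u (mul a (mul b c))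
      = B u (mul (mul b a) c) - B u (mul b (mul a c)) := by
    intro u a b c
    have := congrArg (B u) (h a b c)
    simpa [map_sub] using this
  refine ⟨⟨?_, ?_⟩, hcomp⟩
  · intro x y z
    apply key
    intro w
    have hxy : tr x y = mul x y + tl y x := sub_eq_iff_eq_add.mp (hcomp x y)
    have hyx : tr y x = mul y x + tl x y := sub_eq_iff_eq_add.mp (hcomp y x)
    simp only [map_add, map_sub, LinearMap.add_apply, LinearMap.sub_apply,
      htr', htl]
    rw [hxy, hyx]
    simp only [map_add, LinearMap.add_apply]
    linear_combination hP z w x y - hP z w y x + hP z x y w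
  · intro x y z
    apply key
    intro w
    have hxy : tr x y = mul x y + tl y x := sub_eq_iff_eq_add.mp (hcomp x y)
    simp only [map_add, map_sub, LinearMap.add_apply, LinearMap.sub_apply,
      htr', htl]
    rw [hxy]
    simp only [map_add, LinearMap.add_apply]
    linear_combination -hP z w x y
end
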